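/- Let h : ℝ → ℝ be h(x) = −1/(1 + e^x). Then the supremum over x ∈ ℝ of the absolute value of the third derivative h⁽³⁾(x) equals 1/8. -/

import Mathlib

open Real

noncomputable def T : ℝ → ℝ := fun x => Real.exp x / (1 + Real.exp x)

lemma T_pos (x : ℝ) : 0 < T x :=
  div_pos (Real.exp_pos x) (by positivity)

lemma T_lt_one (x : ℝ) : T x < 1 := by
  rw [T, div_lt_one (by positivity)]; linarith [Real.exp_pos x]

lemma hT (x : ℝ) : HasDerivAt T (T x - (T x)^2) x := by
  have hne : (1 : ℝ) + Real.exp x ≠ 0 := by positivity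
  have := (Real.hasDerivAt_exp x).div
    ((hasDerivAt_const x (1:ℝ)).add (Real.hasDerivAt_exp x)) hne
  refine this.congr_deriv ?_
  simp only [T, Pi.add_apply]
  field_simp
  ring

lemma hD1 (x : ℝ) : HasDerivAt (fun x => T x - (T x)^2)
    (T x - 3*(T x)^2 + 2*(T x)^3) x := by
  have := (hT x).sub ((hT x).pow 2)
  refine this.congr_deriv ?_
  ring

lemma hD2 (x : ℝ) : HasDerivAt (fun x => T x - 3*(T x)^2 + 2*(T x)^3)
    (T x - 7*(T x)^2 + 12*(T x)^3 - 6*(T x)^4) x := by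
  have := ((hT x).sub ((hasDerivAt_const x (3:ℝ)).mul ((hT x).pow 2))).add
    ((hasDerivAt_const x (2:ℝ)).mul ((hT x).pow 3))
  refine this.congr_deriv ?_
  ring

theorem sigmoid_third_derivative_sup
    (h : ℝ → ℝ) (hh : ∀ x, h x = -1 / (1 + Real.exp x)) :
    (⨆ x : ℝ, |iteratedDeriv 3 h x|) = 1 / 8 := by
  have heq : h = fun x => T x - 1 := by
    funext x
    rw [hh x, T]
    have hne : (1 : ℝ) + Real.exp x ≠ 0 := by positivity
    field_simp
    ring
  have hh' : ∀ x, HasDerivAt h (T x - (T x)^2) x := by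
    intro x
    rw [heq]
    simpa using (hT x).sub_const 1
  have e1 : deriv h = fun x => T x - (T x)^2 := funext fun x => (hh' x).deriv
  have e2 : deriv (deriv h) = fun x => T x - 3*(T x)^2 + 2*(T x)^3 := by
    rw [e1]; exact funext fun x => (hD1 x).deriv
  have e3 : ∀ x, iteratedDeriv 3 h x = T x - 7*(T x)^2 + 12*(T x)^3 - 6*(T x)^4 := by
    intro x
    have : iteratedDeriv 3 h = deriv (deriv (deriv h)) := by
      rw [iteratedDeriv_succ, iteratedDeriv_succ, iteratedDeriv_one]
    rw [this, e2]
    exact (hD2 x).deriv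
  have key : ∀ x : ℝ, |iteratedDeriv 3 h x| ≤ 1/8 := by
    intro x
    rw [e3 x]
    have h0 := T_pos x
    have h1 := T_lt_one x
    set s := T x
    rw [abs_le]
    constructor
    · have hp : 0 < s*(1-s) := mul_pos h0 (by linarith)
      nlinarith [sq_nonneg (s - 1/2), hp, mul_nonneg (sq_nonneg (s - 1/2)) hp.le]
    · nlinarith [sq_nonneg (s*(1-s) - 1/12), sq_nonneg (s - 1/2)]
  have hbdd : BddAbove (Set.range fun x : ℝ => |iteratedDeriv 3 h x|) := by
    refine ⟨1/8, ?_⟩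
    rintro _ ⟨x, rfl⟩
    exact key x
  apply le_antisymm
  · exact ciSup_le key
  · have hT0 : T 0 = 1/2 := by simp [T]; norm_num
    have : |iteratedDeriv 3 h 0| = 1/8 := by
      rw [e3 0, hT0]
      norm_num
    calc (1:ℝ)/8 = |iteratedDeriv 3 h 0| := this.symm
      _ ≤ _ := le_ciSup hbdd 0
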